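/- Let (V, μ) be a weighted graph with a rooted spanning tree of degree bounded by M satisfying the John condition μ(S_t) ≤ c·μ(t) for all t. Then for every p ∈ (1,∞) and every f ∈ ℓ^p(V,μ) with Σ_{s∈V} f(s)μ(s) = 0, the global Poincaré inequality ‖f‖_{ℓ^p(V,μ)} ≤ C_P ‖|∇f|‖_{ℓ^p(V,μ)} holds with C_P ≤ c·M·2·p^{1−1/p}, where |∇f|(t) = Σ_{s∼t} |f(s)−f(t)| is the length of the gradient in the graph. -/

import Mathlib

/-- Rooted spanning tree encoded by a parent map: `s ⪰ t` iff `∃ n, p^[n] s = t`;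
the shadow of `t` is `S_t = {s | s ⪰ t}`. -/
def shadow {V : Type*} (p : V → V) (t : V) : Set V :=
  {s | ∃ n : ℕ, p^[n] s = t}

/-- The set of neighbours of `s` in the spanning tree determined by the parent map `p`. -/
def treeNbhd {V : Type*} (p : V → V) (s : V) : Set V :=
  {t | (p t = s ∧ t ≠ s) ∨ (p s = t ∧ s ≠ t)}

/-- The length of the gradient of `f` at `t`: `|∇f|(t) = ∑_{s ~ t} |f(s) - f(t)|`. -/
noncomputable def gradLen {V : Type*} (G : SimpleGraph V) (f : V → ℝ) (t : V) : ℝ :=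
  ∑' s : {s : V // G.Adj t s}, |f s.1 - f t|

lemma rpow_mvt {p : ℝ} (hp : 1 ≤ p) {x y : ℝ} (hy : 0 ≤ y) (hxy : y ≤ x) :
    x ^ p - y ^ p ≤ p * x ^ (p - 1) * (x - y) := by
  have hx : 0 ≤ x := hy.trans hxy
  rcases hx.eq_or_lt with hx0 | hx0
  · have hy0 : y = 0 := le_antisymm (hxy.trans hx0.symm.le) hy
    have hp0 : p ≠ 0 := by positivity
    simp [← hx0, hy0, Real.zero_rpow hp0]
  · have hs : (-1 : ℝ) ≤ (y - x) / x := by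
      rw [le_div_iff₀ hx0]; linarith
    have hb := one_add_mul_self_le_rpow_one_add hs hp
    have h1 : 1 + (y - x) / x = y / x := by field_simp; ring
    rw [h1] at hb
    have h2 : (y / x) ^ p = y ^ p / x ^ p := Real.div_rpow hy hx0.le p
    rw [h2] at hb
    have hxp : 0 < x ^ p := Real.rpow_pos_of_pos hx0 p
    have h3 : x ^ p * (1 + p * ((y - x) / x)) ≤ y ^ p := by
      calc x ^ p * (1 + p * ((y - x) / x)) ≤ x ^ p * (y ^ p / x ^ p) := by
            exact mul_le_mul_of_nonneg_left hb hxp.le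
        _ = y ^ p := by field_simp
    have h4 : x ^ p / x = x ^ (p - 1) := by
      rw [Real.rpow_sub hx0, Real.rpow_one]
    have h5 : x ^ p * (1 + p * ((y - x) / x)) = x ^ p + p * (x ^ p / x) * (y - x) := by
      field_simp
    rw [h5, h4] at h3
    linarith

open Finset in
lemma pow_sum_le {p : ℝ} (hp : 1 < p) (u : ℕ → ℝ) (hu : ∀ i, 0 ≤ u i) {K : ℝ} (hK : 0 ≤ K)
    (n : ℕ) :
    min (∑ i ∈ Finset.range n, u i) K ^ p ≤
      p * ∑ j ∈ Finset.range n, u j * min (∑ i ∈ Finset.range (j + 1), u i) K ^ (p - 1) := by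
  induction n with
  | zero => simp [Real.zero_rpow (by positivity : p ≠ 0), min_eq_left hK]
  | succ n ih =>
    have hPn : (0:ℝ) ≤ ∑ i ∈ Finset.range n, u i := Finset.sum_nonneg fun i _ => hu i
    have hmono : (∑ i ∈ Finset.range n, u i) ≤ ∑ i ∈ Finset.range (n + 1), u i := by
      rw [Finset.sum_range_succ]; linarith [hu n]
    have h0 : 0 ≤ min (∑ i ∈ Finset.range n, u i) K := le_min hPn hK
    have h1 : min (∑ i ∈ Finset.range n, u i) K ≤ min (∑ i ∈ Finset.range (n + 1), u i) K :=
      min_le_min hmono le_rfl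
    have h2 : min (∑ i ∈ Finset.range (n + 1), u i) K - min (∑ i ∈ Finset.range n, u i) K ≤ u n := by
      rw [Finset.sum_range_succ]
      rcases le_total (∑ i ∈ Finset.range n, u i) K with h | h
      · rw [min_eq_left h]
        linarith [min_le_left (∑ i ∈ Finset.range n, u i + u n) K]
      · rw [min_eq_right h]
        linarith [hu n, min_le_right (∑ i ∈ Finset.range n, u i + u n) K]
    have key := rpow_mvt hp.le h0 h1
    have hpow : (0:ℝ) ≤ min (∑ i ∈ Finset.range (n + 1), u i) K ^ (p - 1) :=
      Real.rpow_nonneg (le_min (hPn.trans hmono) hK) _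
    have hstep : min (∑ i ∈ Finset.range (n + 1), u i) K ^ p
        ≤ min (∑ i ∈ Finset.range n, u i) K ^ p
          + p * (u n * min (∑ i ∈ Finset.range (n + 1), u i) K ^ (p - 1)) := by
      have := mul_le_mul_of_nonneg_left h2 (mul_nonneg (by linarith : (0:ℝ) ≤ p) hpow)
      nlinarith [key]
    rw [Finset.sum_range_succ (fun j => u j * min (∑ i ∈ Finset.range (j + 1), u i) K ^ (p - 1)) n]
    calc min (∑ i ∈ Finset.range (n + 1), u i) K ^ p
        ≤ min (∑ i ∈ Finset.range n, u i) K ^ p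
          + p * (u n * min (∑ i ∈ Finset.range (n + 1), u i) K ^ (p - 1)) := hstep
      _ ≤ p * ∑ j ∈ Finset.range n, u j * min (∑ i ∈ Finset.range (j + 1), u i) K ^ (p - 1)
          + p * (u n * min (∑ i ∈ Finset.range (n + 1), u i) K ^ (p - 1)) := by linarith [ih]
      _ = p * (∑ j ∈ Finset.range n, u j * min (∑ i ∈ Finset.range (j + 1), u i) K ^ (p - 1)
          + u n * min (∑ i ∈ Finset.range (n + 1), u i) K ^ (p - 1)) := by ring


section Tree

variable {V : Type*} {pa : V → V} {a : V}

open Classical in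
noncomputable def Nst (hreach : ∀ t : V, ∃ n : ℕ, pa^[n] t = a) (s : V) : ℕ :=
  Nat.find (hreach s)

variable (hreach : ∀ t : V, ∃ n : ℕ, pa^[n] t = a)

open Classical in
lemma Nst_spec (s : V) : pa^[Nst hreach s] s = a := Nat.find_spec (hreach s)

open Classical in
lemma Nst_min {s : V} {n : ℕ} (h : n < Nst hreach s) : pa^[n] s ≠ a := Nat.find_min (hreach s) h

open Classical in
lemma Nst_le {s : V} {n : ℕ} (h : pa^[n] s = a) : Nst hreach s ≤ n := Nat.find_le h

lemma iterate_eq_root (hroot : pa a = a) {s : V} {n : ℕ} (h : Nst hreach s ≤ n) :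
    pa^[n] s = a := by
  have : pa^[n] s = pa^[n - Nst hreach s] (pa^[Nst hreach s] s) := by
    rw [← Function.iterate_add_apply, Nat.sub_add_cancel h]
  rw [this, Nst_spec hreach, Function.iterate_fixed hroot]

lemma iterate_inj {s : V} {m n : ℕ} (hm : m < Nst hreach s) (hn : n < Nst hreach s)
    (h : pa^[m] s = pa^[n] s) : m = n := by
  by_contra hne
  wlog hlt : m < n generalizing m n
  · exact this hn hm h.symm (Ne.symm hne) (by omega)
  have key : pa^[Nst hreach s - n + m] s = a := by
    have e : pa^[Nst hreach s - n + m] s = pa^[Nst hreach s - n] (pa^[m] s) :=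
      Function.iterate_add_apply pa _ m s
    rw [e, h, ← Function.iterate_add_apply, Nat.sub_add_cancel hn.le, Nst_spec hreach]
  exact Nst_min hreach (by omega : Nst hreach s - n + m < Nst hreach s) key

lemma Nst_iterate {s : V} {m : ℕ} (hm : m ≤ Nst hreach s) :
    Nst hreach (pa^[m] s) = Nst hreach s - m := by
  have h1 : Nst hreach (pa^[m] s) ≤ Nst hreach s - m := by
    apply Nst_le
    rw [← Function.iterate_add_apply, Nat.sub_add_cancel hm, Nst_spec hreach]
  have h2 : Nst hreach s ≤ Nst hreach (pa^[m] s) + m := by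
    apply Nst_le
    rw [Function.iterate_add_apply]
    exact Nst_spec hreach _
  omega

end Tree


open scoped ENNReal

lemma swap_lemma {V : Type*} {pa : V → V} {a : V}
    (hroot : pa a = a) (hreach : ∀ t : V, ∃ n : ℕ, pa^[n] t = a)
    (w : V → ℝ≥0∞) (hwa : w a = 0) (m : V → ℝ≥0∞) :
    ∑' s : V, (∑ n ∈ Finset.range (Nst hreach s), w (pa^[n] s)) * m s
      = ∑' t : V, w t * ∑' s : shadow pa t, m s.1 := by
  classical
  set h : V → V → ℝ≥0∞ := fun s t => if t ≠ a ∧ s ∈ shadow pa t then w t else 0 with hh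
  have claim1 : ∀ s : V, (∑ n ∈ Finset.range (Nst hreach s), w (pa^[n] s)) = ∑' t : V, h s t := by
    intro s
    have hsupp : ∀ t ∉ (Finset.range (Nst hreach s)).image (fun n => pa^[n] s), h s t = 0 := by
      intro t ht
      simp only [hh]
      by_cases hcond : t ≠ a ∧ s ∈ shadow pa t
      · exfalso
        obtain ⟨hta, n, hn⟩ := hcond
        rcases lt_or_ge n (Nst hreach s) with h1 | h1
        · exact ht (Finset.mem_image.2 ⟨n, Finset.mem_range.2 h1, hn⟩)
        · have h2 := iterate_eq_root hreach hroot h1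
          rw [hn] at h2
          exact hta h2
      · exact if_neg hcond
    rw [tsum_eq_sum hsupp]
    have hinj : ∀ x ∈ Finset.range (Nst hreach s), ∀ y ∈ Finset.range (Nst hreach s),
        pa^[x] s = pa^[y] s → x = y := fun x hx y hy hxy =>
      iterate_inj hreach (Finset.mem_range.1 hx) (Finset.mem_range.1 hy) hxy
    rw [Finset.sum_image hinj]
    refine Finset.sum_congr rfl fun n hn => ?_
    simp only [hh]
    have hcond : pa^[n] s ≠ a ∧ s ∈ shadow pa (pa^[n] s) :=
      ⟨Nst_min hreach (Finset.mem_range.1 hn), ⟨n, rfl⟩⟩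
    exact (if_pos hcond).symm
  calc ∑' s : V, (∑ n ∈ Finset.range (Nst hreach s), w (pa^[n] s)) * m s
      = ∑' s : V, (∑' t : V, h s t) * m s := by
        exact tsum_congr fun s => by rw [claim1 s]
    _ = ∑' s : V, ∑' t : V, h s t * m s := by
        exact tsum_congr fun s => by rw [ENNReal.tsum_mul_right]
    _ = ∑' t : V, ∑' s : V, h s t * m s := ENNReal.tsum_comm
    _ = ∑' t : V, w t * ∑' s : shadow pa t, m s.1 := by
        refine tsum_congr fun t => ?_
        by_cases hta : t = a
        · subst hta
          simp [hh, hwa]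
        · have : ∀ s : V, h s t * m s = w t * (shadow pa t).indicator m s := by
            intro s
            by_cases hs : s ∈ shadow pa t
            · simp only [hh, Set.indicator_of_mem hs]
              rw [if_pos (⟨hta, hs⟩ : t ≠ a ∧ s ∈ shadow pa t)]
            · simp only [hh, Set.indicator_of_notMem hs, mul_zero]
              rw [if_neg (fun hco => hs hco.2), zero_mul]
          rw [tsum_congr this, ENNReal.tsum_mul_left, tsum_subtype]

lemma pow_sum_le_tail {p : ℝ} (hp : 1 < p) (u : ℕ → ℝ) (hu : ∀ i, 0 ≤ u i) {K : ℝ} (hK : 0 ≤ K)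
    (n : ℕ) :
    min (∑ i ∈ Finset.range n, u i) K ^ p ≤
      p * ∑ j ∈ Finset.range n, u j * min (∑ i ∈ Finset.range (n - j), u (j + i)) K ^ (p - 1) := by
  have h1 := pow_sum_le hp (fun i => u (n - 1 - i)) (fun i => hu _) hK n
  have e1 : ∑ i ∈ Finset.range n, u (n - 1 - i) = ∑ i ∈ Finset.range n, u i :=
    Finset.sum_range_reflect u n
  rw [e1] at h1
  refine h1.trans (le_of_eq ?_)
  congr 1
  rw [← Finset.sum_range_reflect (fun j => (fun i => u (n - 1 - i)) j *
    min (∑ i ∈ Finset.range (j + 1), u (n - 1 - i)) K ^ (p - 1)) n]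
  refine Finset.sum_congr rfl fun j hj => ?_
  simp only [Finset.mem_range] at hj
  have hj1 : n - 1 - (n - 1 - j) = j := by omega
  have hrange : n - 1 - j + 1 = n - j := by omega
  simp only [hj1, hrange]
  have hsum : ∑ i ∈ Finset.range (n - j), u (n - 1 - i) = ∑ i ∈ Finset.range (n - j), u (j + i) := by
    rw [← Finset.sum_range_reflect (fun i => u (j + i)) (n - j)]
    refine Finset.sum_congr rfl fun i hi => ?_
    simp only [Finset.mem_range] at hi
    congr 1
    omega
  rw [hsum]

open MeasureTheory in
lemma hardy {V : Type*} {pa : V → V} {a : V}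
    (hroot : pa a = a) (hreach : ∀ t : V, ∃ n : ℕ, pa^[n] t = a)
    (μ : V → ℝ) (hμpos : ∀ t, 0 < μ t) (hμsum : Summable μ)
    (c : ℝ) (hc : 0 < c)
    (hjohn : ∀ t : V, (∑' s : shadow pa t, μ s.1) ≤ c * μ t)
    (p q : ℝ) (hpq : p.HolderConjugate q)
    (g : V → ℝ) (hg : ∀ t, 0 ≤ g t) (hga : g a = 0) :
    ∑' s : V, ENNReal.ofReal (∑ n ∈ Finset.range (Nst hreach s), g (pa^[n] s)) ^ p
        * ENNReal.ofReal (μ s)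
      ≤ ENNReal.ofReal (p * c) ^ p
        * ∑' t : V, ENNReal.ofReal (g t) ^ p * ENNReal.ofReal (μ t) := by
  classical
  letI : MeasurableSpace V := ⊤
  letI : MeasurableSingletonClass V := ⟨fun _ => trivial⟩
  have hp1 : 1 < p := hpq.lt
  have hp0 : 0 < p := hpq.pos
  have hq0 : 0 < q := hpq.symm.pos
  have hpq1 : 1 / p + 1 / q = 1 := by
    rw [one_div, one_div]; exact hpq.inv_add_inv_eq_one
  set m : V → ℝ≥0∞ := fun s => ENNReal.ofReal (μ s) with hm
  set FR : V → ℝ := fun s => ∑ n ∈ Finset.range (Nst hreach s), g (pa^[n] s) with hFR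
  have hFRnn : ∀ s, 0 ≤ FR s := fun s => Finset.sum_nonneg fun i _ => hg _
  set B : ℝ≥0∞ := ∑' t : V, ENNReal.ofReal (g t) ^ p * m t with hB
  have hmne : ∀ s, m s ≠ 0 := fun s => (ENNReal.ofReal_pos.2 (hμpos s)).ne'
  have hmtop : ∀ s, m s ≠ ⊤ := fun s => ENNReal.ofReal_ne_top
  have hmtot : (∑' s : V, m s) = ENNReal.ofReal (∑' s, μ s) :=
    (ENNReal.ofReal_tsum_of_nonneg (fun s => (hμpos s).le) hμsum).symm
  have hmtot_top : (∑' s : V, m s) ≠ ⊤ := by rw [hmtot]; exact ENNReal.ofReal_ne_top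
  set C : ℝ≥0∞ := ENNReal.ofReal (p * c) with hC
  have hCne : C ≠ 0 := (ENNReal.ofReal_pos.2 (mul_pos hp0 hc)).ne'
  have hCtop : C ≠ ⊤ := ENNReal.ofReal_ne_top
  have main : ∀ K : ℝ, 0 ≤ K →
      (∑' s : V, ENNReal.ofReal (min (FR s) K) ^ p * m s) ≤ C ^ p * B := by
    intro K hK
    set AK : ℝ≥0∞ := ∑' s : V, ENNReal.ofReal (min (FR s) K) ^ p * m s with hAK
    have hminnn : ∀ s, 0 ≤ min (FR s) K := fun s => le_min (hFRnn s) hK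
    have hAKtop : AK ≠ ⊤ := by
      have hb : ∀ s, ENNReal.ofReal (min (FR s) K) ^ p * m s ≤ ENNReal.ofReal K ^ p * m s :=
        fun s => mul_le_mul_left
          (ENNReal.rpow_le_rpow (ENNReal.ofReal_le_ofReal (min_le_right _ _)) hp0.le) _
      refine ne_top_of_le_ne_top ?_ (ENNReal.tsum_le_tsum hb)
      rw [ENNReal.tsum_mul_left]
      exact ENNReal.mul_ne_top
        (ENNReal.rpow_ne_top_of_nonneg hp0.le ENNReal.ofReal_ne_top) hmtot_top
    set w : V → ℝ≥0∞ :=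
      fun t => ENNReal.ofReal (g t) * ENNReal.ofReal (min (FR t) K) ^ (p - 1) with hw
    have hwa : w a = 0 := by simp [hw, hga]
    have step1 : ∀ s : V, ENNReal.ofReal (min (FR s) K) ^ p
        ≤ ENNReal.ofReal p * ∑ n ∈ Finset.range (Nst hreach s), w (pa^[n] s) := by
      intro s
      have hreal := pow_sum_le_tail hp1 (fun n => g (pa^[n] s)) (fun i => hg _) hK (Nst hreach s)
      have hid : ∀ j ∈ Finset.range (Nst hreach s),
          (∑ i ∈ Finset.range (Nst hreach s - j), g (pa^[j + i] s)) = FR (pa^[j] s) := by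
        intro j hj
        have hjle : j ≤ Nst hreach s := (Finset.mem_range.1 hj).le
        rw [hFR]
        simp only
        rw [Nst_iterate hreach hjle]
        refine Finset.sum_congr rfl fun i _ => ?_
        congr 1
        rw [← Function.iterate_add_apply, Nat.add_comm]
      have hreal' : min (FR s) K ^ p ≤
          p * ∑ j ∈ Finset.range (Nst hreach s), g (pa^[j] s) * min (FR (pa^[j] s)) K ^ (p - 1) := by
        refine hreal.trans (le_of_eq ?_)
        congr 1
        exact Finset.sum_congr rfl fun j hj => by rw [hid j hj]
      have henn : ENNReal.ofReal (min (FR s) K) ^ p = ENNReal.ofReal (min (FR s) K ^ p) :=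
        ENNReal.ofReal_rpow_of_nonneg (hminnn s) hp0.le
      rw [henn]
      calc ENNReal.ofReal (min (FR s) K ^ p)
          ≤ ENNReal.ofReal (p * ∑ j ∈ Finset.range (Nst hreach s),
              g (pa^[j] s) * min (FR (pa^[j] s)) K ^ (p - 1)) := ENNReal.ofReal_le_ofReal hreal'
        _ = ENNReal.ofReal p * ENNReal.ofReal (∑ j ∈ Finset.range (Nst hreach s),
              g (pa^[j] s) * min (FR (pa^[j] s)) K ^ (p - 1)) := ENNReal.ofReal_mul hp0.le
        _ = ENNReal.ofReal p * ∑ j ∈ Finset.range (Nst hreach s),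
              ENNReal.ofReal (g (pa^[j] s) * min (FR (pa^[j] s)) K ^ (p - 1)) := by
            rw [ENNReal.ofReal_sum_of_nonneg (fun i _ =>
              mul_nonneg (hg _) (Real.rpow_nonneg (hminnn _) _))]
        _ = ENNReal.ofReal p * ∑ j ∈ Finset.range (Nst hreach s), w (pa^[j] s) := by
            refine congrArg _ (Finset.sum_congr rfl fun j _ => ?_)
            rw [hw]
            simp only
            rw [ENNReal.ofReal_mul (hg _),
              ENNReal.ofReal_rpow_of_nonneg (hminnn _) (by linarith : (0:ℝ) ≤ p - 1)]
    have step2 : AK ≤ ENNReal.ofReal p * ∑' t : V, w t * (∑' s : shadow pa t, m s.1) := by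
      rw [hAK]
      calc ∑' s : V, ENNReal.ofReal (min (FR s) K) ^ p * m s
          ≤ ∑' s : V, (ENNReal.ofReal p * ∑ n ∈ Finset.range (Nst hreach s), w (pa^[n] s)) * m s :=
            ENNReal.tsum_le_tsum fun s => mul_le_mul_left (step1 s) _
        _ = ENNReal.ofReal p *
            ∑' s : V, (∑ n ∈ Finset.range (Nst hreach s), w (pa^[n] s)) * m s := by
            simp_rw [mul_assoc]
            rw [ENNReal.tsum_mul_left]
        _ = ENNReal.ofReal p * ∑' t : V, w t * (∑' s : shadow pa t, m s.1) := by
            rw [swap_lemma hroot hreach w hwa m]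
    have hjohn' : ∀ t : V, (∑' s : shadow pa t, m s.1) ≤ ENNReal.ofReal c * m t := by
      intro t
      have hsub : Summable (fun s : shadow pa t => μ s.1) := hμsum.subtype _
      have he : (∑' s : shadow pa t, m s.1) = ENNReal.ofReal (∑' s : shadow pa t, μ s.1) :=
        (ENNReal.ofReal_tsum_of_nonneg (fun s => (hμpos _).le) hsub).symm
      rw [he, ← ENNReal.ofReal_mul hc.le]
      exact ENNReal.ofReal_le_ofReal (hjohn t)
    have step3 : AK ≤ C * ∑' t : V, w t * m t := by
      refine step2.trans ?_
      have h1 : (∑' t : V, w t * (∑' s : shadow pa t, m s.1))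
          ≤ ENNReal.ofReal c * ∑' t : V, w t * m t := by
        rw [← ENNReal.tsum_mul_left]
        refine ENNReal.tsum_le_tsum fun t => ?_
        rw [← mul_left_comm]
        exact mul_le_mul_right (hjohn' t) _
      calc ENNReal.ofReal p * ∑' t : V, w t * (∑' s : shadow pa t, m s.1)
          ≤ ENNReal.ofReal p * (ENNReal.ofReal c * ∑' t : V, w t * m t) :=
            mul_le_mul_right h1 _
        _ = C * ∑' t : V, w t * m t := by
            rw [hC, ENNReal.ofReal_mul hp0.le, mul_assoc]
    have holder : (∑' t : V, w t * m t) ≤ B ^ (1 / p) * AK ^ (1 / q) := by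
      set u : V → ℝ≥0∞ := fun t => ENNReal.ofReal (g t) * m t ^ (1 / p) with hu
      set v : V → ℝ≥0∞ := fun t => ENNReal.ofReal (min (FR t) K) ^ (p - 1) * m t ^ (1 / q) with hv
      have hsplit : ∀ t, m t ^ (1 / p) * m t ^ (1 / q) = m t := by
        intro t
        rw [← ENNReal.rpow_add _ _ (hmne t) (hmtop t), hpq1, ENNReal.rpow_one]
      have hwm : ∀ t, w t * m t = u t * v t := by
        intro t
        rw [hu, hv, hw]
        simp only
        rw [mul_mul_mul_comm, hsplit t]
      have hup : ∀ t, u t ^ p = ENNReal.ofReal (g t) ^ p * m t := by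
        intro t
        rw [hu]
        simp only
        rw [ENNReal.mul_rpow_of_nonneg _ _ hp0.le, ← ENNReal.rpow_mul,
          one_div_mul_cancel hp0.ne', ENNReal.rpow_one]
      have hvq : ∀ t, v t ^ q = ENNReal.ofReal (min (FR t) K) ^ p * m t := by
        intro t
        rw [hv]
        simp only
        rw [ENNReal.mul_rpow_of_nonneg _ _ hq0.le, ← ENNReal.rpow_mul,
          ← ENNReal.rpow_mul, one_div_mul_cancel hq0.ne', ENNReal.rpow_one,
          hpq.sub_one_mul_conj]
      have hH := ENNReal.lintegral_mul_le_Lp_mul_Lq (Measure.count : Measure V) hpq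
        (f := u) (g := v) measurable_from_top.aemeasurable measurable_from_top.aemeasurable
      rw [lintegral_count, lintegral_count, lintegral_count] at hH
      calc (∑' t : V, w t * m t) = ∑' t : V, (u * v) t := by
            refine tsum_congr fun t => ?_
            rw [Pi.mul_apply, hwm t]
        _ ≤ (∑' t : V, u t ^ p) ^ (1 / p) * (∑' t : V, v t ^ q) ^ (1 / q) := hH
        _ = B ^ (1 / p) * AK ^ (1 / q) := by
            rw [hB, hAK]
            congr 1
            · congr 1
              exact tsum_congr fun t => hup t
            · congr 1
              exact tsum_congr fun t => hvq t
    have key : AK ≤ C * B ^ (1 / p) * AK ^ (1 / q) := by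
      refine step3.trans ?_
      rw [mul_assoc]
      exact mul_le_mul_right holder _
    by_cases hBtop : B = ⊤
    · rw [hBtop]
      rw [ENNReal.mul_top]
      · exact le_top
      · exact (ENNReal.rpow_pos (lt_of_le_of_ne zero_le (Ne.symm hCne)) hCtop).ne'
    by_cases hAK0 : AK = 0
    · rw [hAK0]; exact zero_le
    have hq' : AK ^ (1 / q) ≠ 0 := by
      intro h
      rw [ENNReal.rpow_eq_zero_iff] at h
      rcases h with ⟨h1, _⟩ | ⟨h1, _⟩
      · exact hAK0 h1
      · exact hAKtop h1
    have hq'' : AK ^ (1 / q) ≠ ⊤ := ENNReal.rpow_ne_top_of_nonneg (by positivity) hAKtop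
    have hsplitAK : AK = AK ^ (1 / p) * AK ^ (1 / q) := by
      rw [← ENNReal.rpow_add _ _ hAK0 hAKtop, hpq1, ENNReal.rpow_one]
    have hcancel : AK ^ (1 / p) ≤ C * B ^ (1 / p) := by
      rw [← ENNReal.mul_le_mul_iff_left hq' hq'', ← hsplitAK]
      exact key
    have := ENNReal.rpow_le_rpow hcancel hp0.le
    rw [← ENNReal.rpow_mul, one_div_mul_cancel hp0.ne', ENNReal.rpow_one,
      ENNReal.mul_rpow_of_nonneg _ _ hp0.le, ← ENNReal.rpow_mul,
      one_div_mul_cancel hp0.ne', ENNReal.rpow_one] at this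
    exact this
  have hiSup : (∑' s : V, ENNReal.ofReal (FR s) ^ p * m s)
      = ⨆ E : Finset V, ∑ s ∈ E, ENNReal.ofReal (FR s) ^ p * m s := ENNReal.tsum_eq_iSup_sum
  calc ∑' s : V, ENNReal.ofReal (FR s) ^ p * m s
      = ⨆ E : Finset V, ∑ s ∈ E, ENNReal.ofReal (FR s) ^ p * m s := hiSup
    _ ≤ C ^ p * B := by
        refine iSup_le fun E => ?_
        set K : ℝ := ∑ s ∈ E, FR s with hKdef
        have hKnn : 0 ≤ K := Finset.sum_nonneg fun s _ => hFRnn s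
        have hEs : ∀ s ∈ E, FR s ≤ K := fun s hs =>
          Finset.single_le_sum (fun i _ => hFRnn i) hs
        calc ∑ s ∈ E, ENNReal.ofReal (FR s) ^ p * m s
            = ∑ s ∈ E, ENNReal.ofReal (min (FR s) K) ^ p * m s :=
              Finset.sum_congr rfl fun s hs => by rw [min_eq_left (hEs s hs)]
          _ ≤ ∑' s : V, ENNReal.ofReal (min (FR s) K) ^ p * m s := ENNReal.sum_le_tsum E
          _ ≤ C ^ p * B := main K hKnn

/-- Global `ℓ^p`-Poincaré inequality, `1 < p < ∞`: on a weighted connected locally finite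
graph with a rooted spanning tree of tree-degree at most `M` satisfying the John condition
`μ(S_t) ≤ c μ(t)`, every mean-zero `f ∈ ℓ^p(V,μ)` satisfies
`‖f‖_{ℓ^p(V,μ)} ≤ C_P ‖|∇f|‖_{ℓ^p(V,μ)}` with `C_P ≤ c M 2 p^{1-1/p}`
(the norms are computed in `[0,∞]`, so no summability of the gradient is assumed). -/
theorem global_poincare {V : Type*} [Countable V] (G : SimpleGraph V) (hG : G.Connected)
    (hlf : ∀ t : V, {s : V | G.Adj t s}.Finite)
    (pa : V → V) (a : V)
    (hroot : pa a = a) (hreach : ∀ t : V, ∃ n : ℕ, pa^[n] t = a)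
    (htree : ∀ t : V, t ≠ a → G.Adj t (pa t))
    (μ : V → ℝ) (hμpos : ∀ t, 0 < μ t) (hμsum : Summable μ)
    (c : ℝ) (hc : 0 < c)
    (hjohn : ∀ t : V, (∑' s : shadow pa t, μ s.1) ≤ c * μ t)
    (M : ℕ) (hdeg : ∀ s : V, (treeNbhd pa s).Finite ∧ (treeNbhd pa s).ncard ≤ M)
    (p : ℝ) (hp : 1 < p)
    (f : V → ℝ) (hf : Summable fun s => |f s| ^ p * μ s)
    (hmean : (∑' s : V, f s * μ s) = 0) :
    (∑' s : V, ENNReal.ofReal (|f s| ^ p * μ s)) ^ (1 / p) ≤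
      ENNReal.ofReal (c * M * 2 * p ^ (1 - 1 / p)) *
        (∑' t : V, ENNReal.ofReal (gradLen G f t ^ p * μ t)) ^ (1 / p) := by
  classical
  letI : MeasurableSpace V := ⊤
  letI : MeasurableSingletonClass V := ⟨fun _ => trivial⟩
  have hp0 : 0 < p := lt_trans one_pos hp
  set m : V → ℝ≥0∞ := fun s => ENNReal.ofReal (μ s) with hm
  have hmne : ∀ s, m s ≠ 0 := fun s => (ENNReal.ofReal_pos.2 (hμpos s)).ne'
  have hmtop : ∀ s, m s ≠ ⊤ := fun s => ENNReal.ofReal_ne_top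
  have hgradnn : ∀ t, 0 ≤ gradLen G f t := fun t => tsum_nonneg fun s => abs_nonneg _
  have hgradsum : ∀ t : V, Summable (fun s : {s : V // G.Adj t s} => |f s.1 - f t|) := by
    intro t
    haveI : Finite {s : V // G.Adj t s} := Set.Finite.to_subtype (hlf t)
    exact Summable.of_finite
  have hLterm : ∀ s, ENNReal.ofReal (|f s| ^ p * μ s) = ENNReal.ofReal |f s| ^ p * m s := by
    intro s
    rw [ENNReal.ofReal_mul (Real.rpow_nonneg (abs_nonneg _) _),
      ENNReal.ofReal_rpow_of_nonneg (abs_nonneg _) hp0.le]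
  have hBterm : ∀ t, ENNReal.ofReal (gradLen G f t ^ p * μ t)
      = ENNReal.ofReal (gradLen G f t) ^ p * m t := by
    intro t
    rw [ENNReal.ofReal_mul (Real.rpow_nonneg (hgradnn _) _),
      ENNReal.ofReal_rpow_of_nonneg (hgradnn _) hp0.le]
  rw [tsum_congr hLterm, tsum_congr hBterm]
  set B' : ℝ≥0∞ := ∑' t : V, ENNReal.ofReal (gradLen G f t) ^ p * m t with hB'
  by_cases hone : ∀ s : V, s = a
  · -- degenerate: single vertex, f = 0
    have hfa : f a = 0 := by
      have h1 : (∑' s : V, f s * μ s) = f a * μ a :=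
        tsum_eq_single a (fun b hb => absurd (hone b) hb)
      rw [hmean] at h1
      have := (hμpos a).ne'
      field_simp at h1
      exact (mul_eq_zero.1 h1.symm).resolve_right this
    have hz : ∀ s : V, ENNReal.ofReal |f s| ^ p * m s = 0 := by
      intro s
      rw [hone s, hfa]
      simp [ENNReal.zero_rpow_of_pos hp0]
    rw [tsum_congr hz, tsum_zero, ENNReal.zero_rpow_of_pos (by positivity)]
    exact zero_le
  push_neg at hone
  obtain ⟨b0, hb0⟩ := hone
  -- there is a child of `a`, hence `1 ≤ M`
  have hchild : ∃ u : V, pa u = a ∧ u ≠ a := by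
    have hN : 0 < Nst hreach b0 := by
      rcases Nat.eq_zero_or_pos (Nst hreach b0) with h | h
      · exact absurd (by simpa [h] using Nst_spec hreach b0) hb0
      · exact h
    refine ⟨pa^[Nst hreach b0 - 1] b0, ?_, Nst_min hreach (by omega)⟩
    have : pa (pa^[Nst hreach b0 - 1] b0) = pa^[Nst hreach b0] b0 := by
      rw [← Function.iterate_succ_apply' pa]
      congr 1
      omega
    rw [this, Nst_spec hreach]
  obtain ⟨u, hu, hua⟩ := hchild
  have hM1 : 1 ≤ M := by
    have h1 : u ∈ treeNbhd pa a := Or.inl ⟨hu, hua⟩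
    have h2 := (hdeg a).2
    have h3 : 0 < (treeNbhd pa a).ncard := (Set.ncard_pos (hdeg a).1).2 ⟨u, h1⟩
    omega
  set q : ℝ := Real.conjExponent p with hqdef
  have hpq : p.HolderConjugate q := Real.HolderConjugate.conjExponent hp
  have hq0 : 0 < q := hpq.symm.pos
  have hpq1 : 1 / p + 1 / q = 1 := by
    rw [one_div, one_div]; exact hpq.inv_add_inv_eq_one
  by_cases hM2 : 2 ≤ M
  · -- main case
    set gR : V → ℝ := fun t => if t = a then 0 else |f t - f (pa t)| with hgR
    have hgnn : ∀ t, 0 ≤ gR t := by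
      intro t
      by_cases h : t = a <;> simp [hgR, h, abs_nonneg]
    have hga : gR a = 0 := by simp [hgR]
    have hgle : ∀ t, gR t ≤ gradLen G f t := by
      intro t
      by_cases h : t = a
      · rw [hgR]; simp only [if_pos h]; exact hgradnn t
      · rw [hgR]; simp only [if_neg h]
        have h2 := Summable.le_tsum (hgradsum t) ⟨pa t, htree t h⟩ (fun j _ => abs_nonneg _)
        rw [abs_sub_comm]
        exact h2
    have htel0 : ∀ (k : ℕ) (s : V), |f s - f (pa^[k] s)| ≤
        ∑ n ∈ Finset.range k, |f (pa^[n] s) - f (pa^[n+1] s)| := by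
      intro k s
      induction k with
      | zero => simp
      | succ k ih =>
        rw [Finset.sum_range_succ]
        have h3 : |f s - f (pa^[k+1] s)|
            ≤ |f s - f (pa^[k] s)| + |f (pa^[k] s) - f (pa^[k+1] s)| := by
          have h4 := abs_add_le (f s - f (pa^[k] s)) (f (pa^[k] s) - f (pa^[k+1] s))
          simpa using h4
        linarith
    have htel : ∀ s : V, |f s - f a| ≤ ∑ n ∈ Finset.range (Nst hreach s), gR (pa^[n] s) := by
      intro s
      have h1 := htel0 (Nst hreach s) s
      rw [Nst_spec hreach] at h1
      refine h1.trans (le_of_eq (Finset.sum_congr rfl fun n hn => ?_))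
      have hne := Nst_min hreach (Finset.mem_range.1 hn)
      rw [Function.iterate_succ_apply']
      simp only [hgR]
      rw [if_neg hne]
    have hfabs_sum : Summable (fun s => |f s| * μ s) := by
      refine Summable.of_nonneg_of_le (fun s => mul_nonneg (abs_nonneg _) (hμpos s).le)
        (fun s => ?_) (hf.add hμsum)
      rcases le_total (|f s|) 1 with h | h
      · have h1 : |f s| * μ s ≤ μ s := by nlinarith [hμpos s, abs_nonneg (f s)]
        have h2 : (0:ℝ) ≤ |f s| ^ p * μ s :=
          mul_nonneg (Real.rpow_nonneg (abs_nonneg _) _) (hμpos s).le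
        linarith
      · have h2 : |f s| ^ (1:ℝ) ≤ |f s| ^ p := Real.rpow_le_rpow_of_exponent_le h hp.le
        rw [Real.rpow_one] at h2
        nlinarith [hμpos s]
    have hfmul_sum : Summable (fun s => f s * μ s) := by
      apply Summable.of_abs
      have he : ∀ s : V, |f s * μ s| = |f s| * μ s := fun s => by
        rw [abs_mul, abs_of_pos (hμpos s)]
      simp only [he]
      exact hfabs_sum
    have hdiff_sum : Summable (fun s => |f a - f s| * μ s) := by
      refine Summable.of_nonneg_of_le (fun s => mul_nonneg (abs_nonneg _) (hμpos s).le)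
        (fun s => ?_) ((hμsum.mul_left |f a|).add hfabs_sum)
      have h1 : |f a - f s| ≤ |f a| + |f s| := by
        calc |f a - f s| = |f a + -(f s)| := by rw [sub_eq_add_neg]
          _ ≤ |f a| + |-(f s)| := abs_add_le _ _
          _ = |f a| + |f s| := by rw [abs_neg]
      nlinarith [mul_le_mul_of_nonneg_right h1 (hμpos s).le]
    have hμtot_pos : 0 < ∑' s, μ s :=
      lt_of_lt_of_le (hμpos a) (Summable.le_tsum hμsum a fun j _ => (hμpos j).le)
    set W : ℝ≥0∞ := ∑' s : V, m s with hW
    have hWeq : W = ENNReal.ofReal (∑' s, μ s) :=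
      (ENNReal.ofReal_tsum_of_nonneg (fun s => (hμpos s).le) hμsum).symm
    have hW0 : W ≠ 0 := by rw [hWeq]; exact (ENNReal.ofReal_pos.2 hμtot_pos).ne'
    have hWtop : W ≠ ⊤ := by rw [hWeq]; exact ENNReal.ofReal_ne_top
    have hmean2 : |f a| * (∑' s, μ s) ≤ ∑' s, |f a - f s| * μ s := by
      have e0 : ∀ s : V, (f a - f s) * μ s = f a * μ s - f s * μ s := fun s => by ring
      have e1 : (∑' s : V, (f a - f s) * μ s) = f a * ∑' s, μ s := by
        rw [tsum_congr e0, Summable.tsum_sub (hμsum.mul_left (f a)) hfmul_sum, hmean, sub_zero,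
          tsum_mul_left]
      have hnorm : Summable (fun s : V => ‖(f a - f s) * μ s‖) := by
        have he : ∀ s : V, ‖(f a - f s) * μ s‖ = |f a - f s| * μ s := fun s => by
          rw [Real.norm_eq_abs, abs_mul, abs_of_pos (hμpos s)]
        simp only [he]
        exact hdiff_sum
      have e2 := norm_tsum_le_tsum_norm hnorm
      rw [e1] at e2
      have e3 : ‖f a * ∑' s, μ s‖ = |f a| * (∑' s, μ s) := by
        rw [Real.norm_eq_abs, abs_mul, abs_of_pos hμtot_pos]
      rw [e3] at e2
      refine e2.trans (le_of_eq (tsum_congr fun s => ?_))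
      rw [Real.norm_eq_abs, abs_mul, abs_of_pos (hμpos s)]
    set φn : ℝ≥0∞ := (∑' s : V, ENNReal.ofReal |f s - f a| ^ p * m s) ^ (1/p) with hφn
    have hmsplit : ∀ t, m t ^ (1/p) * m t ^ (1/q) = m t := fun t => by
      rw [← ENNReal.rpow_add _ _ (hmne t) (hmtop t), hpq1, ENNReal.rpow_one]
    have hmz : ENNReal.ofReal |f a| * W ^ (1/p) ≤ φn := by
      set uu : V → ℝ≥0∞ := fun t => ENNReal.ofReal |f t - f a| * m t ^ (1/p) with huu
      set vv : V → ℝ≥0∞ := fun t => m t ^ (1/q) with hvv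
      have hH := ENNReal.lintegral_mul_le_Lp_mul_Lq (MeasureTheory.Measure.count : MeasureTheory.Measure V) hpq
        (f := uu) (g := vv) measurable_from_top.aemeasurable measurable_from_top.aemeasurable
      rw [MeasureTheory.lintegral_count, MeasureTheory.lintegral_count, MeasureTheory.lintegral_count] at hH
      have h1 : ENNReal.ofReal (|f a| * (∑' s, μ s)) ≤ ∑' t : V, (uu * vv) t := by
        refine (ENNReal.ofReal_le_ofReal hmean2).trans ?_
        rw [ENNReal.ofReal_tsum_of_nonneg
          (fun s => mul_nonneg (abs_nonneg _) (hμpos s).le) hdiff_sum]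
        refine ENNReal.tsum_le_tsum fun t => le_of_eq ?_
        rw [Pi.mul_apply, huu, hvv]
        simp only
        rw [mul_assoc, hmsplit t, ENNReal.ofReal_mul (abs_nonneg _), abs_sub_comm (f a) (f t)]
      have h2 : (∑' t : V, uu t ^ p) ^ (1/p) = φn := by
        rw [hφn]
        congr 1
        refine tsum_congr fun t => ?_
        rw [huu]
        simp only
        rw [ENNReal.mul_rpow_of_nonneg _ _ hp0.le, ← ENNReal.rpow_mul,
          one_div_mul_cancel hp0.ne', ENNReal.rpow_one]
      have h3 : (∑' t : V, vv t ^ q) = W := by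
        refine tsum_congr fun t => ?_
        rw [hvv]
        simp only
        rw [← ENNReal.rpow_mul, one_div_mul_cancel hq0.ne', ENNReal.rpow_one]
      have h4 : ENNReal.ofReal |f a| * W ≤ φn * W ^ (1/q) := by
        calc ENNReal.ofReal |f a| * W = ENNReal.ofReal (|f a| * (∑' s, μ s)) := by
              rw [ENNReal.ofReal_mul (abs_nonneg _), hWeq]
          _ ≤ ∑' t : V, (uu * vv) t := h1
          _ ≤ (∑' t : V, uu t ^ p) ^ (1/p) * (∑' t : V, vv t ^ q) ^ (1/q) := hH
          _ = φn * W ^ (1/q) := by rw [h2, h3]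
      have hWq0 : W ^ (1/q) ≠ 0 := by
        intro h
        rw [ENNReal.rpow_eq_zero_iff] at h
        rcases h with ⟨h1', _⟩ | ⟨h1', _⟩
        · exact hW0 h1'
        · exact hWtop h1'
      have hWqtop : W ^ (1/q) ≠ ⊤ := ENNReal.rpow_ne_top_of_nonneg (by positivity) hWtop
      rw [← ENNReal.mul_le_mul_iff_left hWq0 hWqtop]
      calc ENNReal.ofReal |f a| * W ^ (1/p) * W ^ (1/q)
          = ENNReal.ofReal |f a| * W := by
            rw [mul_assoc, ← ENNReal.rpow_add _ _ hW0 hWtop, hpq1, ENNReal.rpow_one]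
        _ ≤ φn * W ^ (1/q) := h4
    have hmink : (∑' s : V, ENNReal.ofReal |f s| ^ p * m s) ^ (1/p) ≤ 2 * φn := by
      set φf : V → ℝ≥0∞ := fun s => ENNReal.ofReal |f s - f a| * m s ^ (1/p) with hφf
      set ψ : V → ℝ≥0∞ := fun s => ENNReal.ofReal |f a| * m s ^ (1/p) with hψ
      have hMk := ENNReal.lintegral_Lp_add_le (μ := (MeasureTheory.Measure.count : MeasureTheory.Measure V))
        (f := φf) (g := ψ) measurable_from_top.aemeasurable measurable_from_top.aemeasurable hp.le
      rw [MeasureTheory.lintegral_count, MeasureTheory.lintegral_count, MeasureTheory.lintegral_count] at hMk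
      have hpt : ∀ s : V, ENNReal.ofReal |f s| ^ p * m s ≤ ((φf + ψ) s) ^ p := by
        intro s
        have h1 : ENNReal.ofReal |f s| ≤ ENNReal.ofReal |f s - f a| + ENNReal.ofReal |f a| := by
          rw [← ENNReal.ofReal_add (abs_nonneg _) (abs_nonneg _)]
          apply ENNReal.ofReal_le_ofReal
          calc |f s| = |(f s - f a) + f a| := by ring_nf
            _ ≤ |f s - f a| + |f a| := abs_add_le _ _
        have h2 : ENNReal.ofReal |f s| * m s ^ (1/p) ≤ (φf + ψ) s := by
          rw [Pi.add_apply, hφf, hψ]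
          simp only
          rw [← add_mul]
          exact mul_le_mul_left h1 _
        have h3 := ENNReal.rpow_le_rpow h2 hp0.le
        rw [ENNReal.mul_rpow_of_nonneg _ _ hp0.le, ← ENNReal.rpow_mul,
          one_div_mul_cancel hp0.ne', ENNReal.rpow_one] at h3
        exact h3
      have h5 : (∑' s : V, ENNReal.ofReal |f s| ^ p * m s) ^ (1/p)
          ≤ (∑' s : V, ((φf + ψ) s) ^ p) ^ (1/p) :=
        ENNReal.rpow_le_rpow (ENNReal.tsum_le_tsum hpt) (by positivity)
      have h6 : (∑' s : V, φf s ^ p) ^ (1/p) = φn := by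
        rw [hφn]
        congr 1
        refine tsum_congr fun s => ?_
        rw [hφf]
        simp only
        rw [ENNReal.mul_rpow_of_nonneg _ _ hp0.le, ← ENNReal.rpow_mul,
          one_div_mul_cancel hp0.ne', ENNReal.rpow_one]
      have h7 : (∑' s : V, ψ s ^ p) ^ (1/p) = ENNReal.ofReal |f a| * W ^ (1/p) := by
        have e : ∀ s : V, ψ s ^ p = ENNReal.ofReal |f a| ^ p * m s := by
          intro s
          rw [hψ]
          simp only
          rw [ENNReal.mul_rpow_of_nonneg _ _ hp0.le, ← ENNReal.rpow_mul,
            one_div_mul_cancel hp0.ne', ENNReal.rpow_one]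
        rw [tsum_congr e, ENNReal.tsum_mul_left,
          ENNReal.mul_rpow_of_nonneg _ _ (by positivity : (0:ℝ) ≤ 1/p),
          ← ENNReal.rpow_mul, mul_one_div_cancel hp0.ne', ENNReal.rpow_one]
      calc (∑' s : V, ENNReal.ofReal |f s| ^ p * m s) ^ (1/p)
          ≤ (∑' s : V, ((φf + ψ) s) ^ p) ^ (1/p) := h5
        _ ≤ (∑' s : V, φf s ^ p) ^ (1/p) + (∑' s : V, ψ s ^ p) ^ (1/p) := hMk
        _ = φn + ENNReal.ofReal |f a| * W ^ (1/p) := by rw [h6, h7]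
        _ ≤ φn + φn := add_le_add_right hmz _
        _ = 2 * φn := (two_mul φn).symm
    have hhardy := hardy hroot hreach μ hμpos hμsum c hc hjohn p q hpq gR hgnn hga
    have hφle : (∑' s : V, ENNReal.ofReal |f s - f a| ^ p * m s)
        ≤ ∑' s : V, ENNReal.ofReal (∑ n ∈ Finset.range (Nst hreach s), gR (pa^[n] s)) ^ p
            * m s :=
      ENNReal.tsum_le_tsum fun s => mul_le_mul_left
        (ENNReal.rpow_le_rpow (ENNReal.ofReal_le_ofReal (htel s)) hp0.le) _
    have hgB : (∑' t : V, ENNReal.ofReal (gR t) ^ p * m t) ≤ B' :=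
      ENNReal.tsum_le_tsum fun t => mul_le_mul_left
        (ENNReal.rpow_le_rpow (ENNReal.ofReal_le_ofReal (hgle t)) hp0.le) _
    have hφn_le : φn ≤ ENNReal.ofReal (p * c) * B' ^ (1/p) := by
      have h1 : (∑' s : V, ENNReal.ofReal |f s - f a| ^ p * m s)
          ≤ ENNReal.ofReal (p * c) ^ p * B' :=
        hφle.trans (hhardy.trans (mul_le_mul_right hgB _))
      have h2 := ENNReal.rpow_le_rpow h1 (by positivity : (0:ℝ) ≤ 1/p)
      rw [ENNReal.mul_rpow_of_nonneg _ _ (by positivity : (0:ℝ) ≤ 1/p),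
        ← ENNReal.rpow_mul, mul_one_div_cancel hp0.ne', ENNReal.rpow_one] at h2
      exact h2
    have hconst : 2 * ENNReal.ofReal (p * c) ≤ ENNReal.ofReal (c * M * 2 * p ^ (1 - 1/p)) := by
      have h2M : (2:ℝ) ≤ (M:ℝ) := by exact_mod_cast hM2
      have hppow : p ^ (1/p : ℝ) ≤ 2 := by
        have hb : p ≤ 2 ^ (p : ℝ) := by
          have hber := one_add_mul_self_le_rpow_one_add (by norm_num : (-1:ℝ) ≤ 1) hp.le
          norm_num at hber
          linarith
        have h3 := Real.rpow_le_rpow hp0.le hb (by positivity : (0:ℝ) ≤ 1/p)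
        rwa [← Real.rpow_mul (by norm_num : (0:ℝ) ≤ 2), mul_one_div_cancel hp0.ne',
          Real.rpow_one] at h3
      have hpp : (0:ℝ) ≤ p ^ (1 - 1/p) := Real.rpow_nonneg hp0.le _
      have hsplitp : p = p ^ (1/p : ℝ) * p ^ (1 - 1/p : ℝ) := by
        rw [← Real.rpow_add hp0]
        norm_num
      have hA : p ≤ 2 * p ^ (1 - 1/p) := by
        nlinarith [mul_le_mul_of_nonneg_right hppow hpp]
      have hkey : 2 * (p * c) ≤ c * M * 2 * p ^ (1 - 1/p) := by
        nlinarith [hA, hc, mul_nonneg (mul_nonneg hc.le hpp) (sub_nonneg.2 h2M)]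
      calc 2 * ENNReal.ofReal (p * c) = ENNReal.ofReal (2 * (p * c)) := by
            rw [ENNReal.ofReal_mul (by norm_num : (0:ℝ) ≤ 2), ENNReal.ofReal_ofNat]
        _ ≤ ENNReal.ofReal (c * M * 2 * p ^ (1 - 1/p)) := ENNReal.ofReal_le_ofReal hkey
    calc (∑' s : V, ENNReal.ofReal |f s| ^ p * m s) ^ (1/p)
        ≤ 2 * φn := hmink
      _ ≤ 2 * (ENNReal.ofReal (p * c) * B' ^ (1/p)) := mul_le_mul_right hφn_le _
      _ = (2 * ENNReal.ofReal (p * c)) * B' ^ (1/p) := by rw [mul_assoc]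
      _ ≤ ENNReal.ofReal (c * M * 2 * p ^ (1 - 1/p)) * B' ^ (1/p) := mul_le_mul_left hconst _
  · -- M = 1 : at most two vertices
    have hMeq : M = 1 := by omega
    have hnofix : ∀ s : V, s ≠ a → pa s ≠ s := by
      intro s hsa hfix
      have hNs := Nst_spec hreach s
      rw [Function.iterate_fixed hfix] at hNs
      exact hsa hNs
    have hpar : ∀ t : V, t ≠ a → pa t = a := by
      intro t hta
      by_contra hv
      have hva : pa t ≠ a := hv
      have htv : t ≠ pa t := fun h => hnofix t hta h.symm
      have htpav : t ≠ pa (pa t) := by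
        intro h2
        have hcyc : ∀ n : ℕ, pa^[n] t = t ∨ pa^[n] t = pa t := by
          intro n
          induction n with
          | zero => exact Or.inl rfl
          | succ n ih =>
            rw [Function.iterate_succ_apply']
            rcases ih with h | h
            · rw [h]; exact Or.inr rfl
            · rw [h]; exact Or.inl h2.symm
        rcases hcyc (Nst hreach t) with h | h <;> rw [Nst_spec hreach] at h
        · exact hta h.symm
        · exact hva h.symm
      have hmem1 : t ∈ treeNbhd pa (pa t) := Or.inl ⟨rfl, htv⟩
      have hmem2 : pa (pa t) ∈ treeNbhd pa (pa t) :=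
        Or.inr ⟨rfl, Ne.symm (hnofix (pa t) hva)⟩
      have hle1 : (treeNbhd pa (pa t)).ncard ≤ 1 := by
        have := (hdeg (pa t)).2; omega
      exact htpav ((Set.ncard_le_one (hdeg (pa t)).1).1 hle1 t hmem1 (pa (pa t)) hmem2)
    have hclass : ∀ t : V, t = a ∨ t = u := by
      intro t
      by_cases hta : t = a
      · exact Or.inl hta
      · refine Or.inr ?_
        have hmem1 : t ∈ treeNbhd pa a := Or.inl ⟨hpar t hta, hta⟩
        have hmem2 : u ∈ treeNbhd pa a := Or.inl ⟨hu, hua⟩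
        have hle1 : (treeNbhd pa a).ncard ≤ 1 := by
          have := (hdeg a).2; omega
        exact (Set.ncard_le_one (hdeg a).1).1 hle1 t hmem1 u hmem2
    have heq2 : f a * μ a + f u * μ u = 0 := by
      have hsum2 : (∑' s : V, f s * μ s) = ∑ s ∈ ({a, u} : Finset V), f s * μ s := by
        refine tsum_eq_sum fun b hb => ?_
        exfalso
        rcases hclass b with rfl | rfl
        · exact hb (Finset.mem_insert_self _ _)
        · exact hb (Finset.mem_insert_of_mem (Finset.mem_singleton_self _))
      rw [hsum2, Finset.sum_insert (by simp [Ne.symm hua]), Finset.sum_singleton] at hmean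
      linarith
    have hopp : f a * f u ≤ 0 := by
      have h1 : f a * (f a * μ a + f u * μ u) = 0 := by rw [heq2]; ring
      nlinarith [h1, mul_nonneg (mul_self_nonneg (f a)) (hμpos a).le, hμpos u]
    have habs : ∀ s : V, |f s| ≤ |f a - f u| := by
      intro s
      rcases hclass s with rfl | rfl
      · rw [← Real.sqrt_sq_eq_abs, ← Real.sqrt_sq_eq_abs]
        apply Real.sqrt_le_sqrt
        nlinarith [hopp, sq_nonneg (f u)]
      · rw [← Real.sqrt_sq_eq_abs, ← Real.sqrt_sq_eq_abs]
        apply Real.sqrt_le_sqrt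
        nlinarith [hopp, sq_nonneg (f a)]
    have hadj : G.Adj u a := by
      have h1 := htree u hua
      rw [hu] at h1
      exact h1
    have hgrad : ∀ s : V, |f a - f u| ≤ gradLen G f s := by
      intro s
      rcases hclass s with h | h <;> rw [h]
      · have h2 := Summable.le_tsum (hgradsum a) ⟨u, hadj.symm⟩ (fun j _ => abs_nonneg _)
        rw [abs_sub_comm]
        exact h2
      · exact Summable.le_tsum (hgradsum u) ⟨a, hadj⟩ (fun j _ => abs_nonneg _)
    have hpt : ∀ s : V, ENNReal.ofReal |f s| ^ p * m s
        ≤ ENNReal.ofReal (gradLen G f s) ^ p * m s := fun s =>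
      mul_le_mul_left (ENNReal.rpow_le_rpow
        (ENNReal.ofReal_le_ofReal ((habs s).trans (hgrad s))) hp0.le) _
    have hc1 : (1:ℝ) ≤ c := by
      have hsub : Summable (fun s : shadow pa a => μ s.1) := hμsum.subtype _
      have hmem : a ∈ shadow pa a := ⟨0, rfl⟩
      have h2 := Summable.le_tsum hsub ⟨a, hmem⟩ (fun j _ => (hμpos _).le)
      nlinarith [hjohn a, hμpos a]
    have hppow : (1:ℝ) ≤ p ^ (1 - 1/p) := by
      have hexp : (0:ℝ) ≤ 1 - 1/p := by
        have : 1/p ≤ 1 := by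
          rw [div_le_one hp0]; exact hp.le
        linarith
      have h2 := Real.rpow_le_rpow_of_exponent_le hp.le hexp
      rwa [Real.rpow_zero] at h2
    have hone_le : (1:ℝ≥0∞) ≤ ENNReal.ofReal (c * M * 2 * p ^ (1 - 1/p)) := by
      rw [ENNReal.one_le_ofReal, hMeq]
      push_cast
      nlinarith
    calc (∑' s : V, ENNReal.ofReal |f s| ^ p * m s) ^ (1/p)
        ≤ B' ^ (1/p) := ENNReal.rpow_le_rpow (ENNReal.tsum_le_tsum hpt) (by positivity)
      _ = 1 * B' ^ (1/p) := (one_mul _).symm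
      _ ≤ ENNReal.ofReal (c * M * 2 * p ^ (1 - 1/p)) * B' ^ (1/p) :=
          mul_le_mul_left hone_le _
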